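/- arXiv:2202.12647 — 5 statements merged into one kernel-verified Lean document; each statement's English description precedes it below -/
import Mathlib

section
/- Let Y be a normed linear space and T a nonzero bounded k-linear map into Y with the property: whenever T ⊥_B A, then [A x⃗ₙ, T x⃗ₙ]ₙ → 0 for every sequence (x⃗ₙ) in the product of unit spheres with ‖T x⃗ₙ‖ → ‖T‖ and every sequence of semi-inner-products ([·,·]ₙ) on Y compatible with the norm. Then T is smooth, i.e., T ⊥_B A₁ and T ⊥_B A₂ imply T ⊥_B (A₁ + A₂). -/
open Filter Topology

/-- A semi-inner-product (in the sense of Giles-Lumer) on a normed space `Y`,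
compatible with the norm. -/
structure SIP (𝕜 Y : Type*) [RCLike 𝕜] [NormedAddCommGroup Y] [NormedSpace 𝕜 Y] where
  toFun : Y → Y → 𝕜
  add_left : ∀ x y z, toFun (x + y) z = toFun x z + toFun y z
  smul_left : ∀ (a : 𝕜) (x z : Y), toFun (a • x) z = a * toFun x z
  smul_right : ∀ (a : 𝕜) (x z : Y), toFun x (a • z) = starRingEnd 𝕜 a * toFun x z
  norm_compat : ∀ x, toFun x x = (‖x‖ : 𝕜) ^ 2
  cauchy_schwarz : ∀ x z, ‖toFun x z‖ ≤ ‖x‖ * ‖z‖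

set_option maxHeartbeats 1000000

lemma exists_sip (𝕜 Y : Type*) [RCLike 𝕜] [NormedAddCommGroup Y] [NormedSpace 𝕜 Y] :
    Nonempty (SIP 𝕜 Y) := by
  classical
  -- setoid of rays
  let s : Setoid Y := ⟨fun z w => ∃ a : 𝕜, a ≠ 0 ∧ a • z = w, by
    constructor
    · intro z; exact ⟨1, one_ne_zero, one_smul _ _⟩
    · rintro z w ⟨a, ha, rfl⟩; exact ⟨a⁻¹, inv_ne_zero ha, by simp [smul_smul, inv_mul_cancel₀ ha]⟩
    · rintro z w v ⟨a, ha, rfl⟩ ⟨b, hb, rfl⟩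
      exact ⟨b * a, mul_ne_zero hb ha, (smul_smul b a z).symm⟩⟩
  let rep : Y → Y := fun z => (Quotient.mk s z).out
  have hrep : ∀ z : Y, ∃ a : 𝕜, a ≠ 0 ∧ a • rep z = z := fun z => Quotient.mk_out (s := s) z
  let coef : Y → 𝕜 := fun z => (hrep z).choose
  have hcoef : ∀ z : Y, coef z ≠ 0 ∧ coef z • rep z = z := fun z =>
    ⟨(hrep z).choose_spec.1, (hrep z).choose_spec.2⟩
  have hrep_smul : ∀ (a : 𝕜), a ≠ 0 → ∀ z : Y, rep (a • z) = rep z := by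
    intro a ha z
    have : Quotient.mk s (a • z) = Quotient.mk s z := Quotient.sound ⟨a⁻¹, inv_ne_zero ha, by
      simp [smul_smul, inv_mul_cancel₀ ha]⟩
    simp only [rep, this]
  let F : Y → (Y →L[𝕜] 𝕜) := fun y => if h : y = 0 then 0 else (exists_dual_vector 𝕜 y (norm_ne_zero_iff.mpr h)).choose
  have hF1 : ∀ y : Y, y ≠ 0 → F y y = (‖y‖ : 𝕜) := by
    intro y hy; simp only [F, dif_neg hy]; exact (exists_dual_vector 𝕜 y (norm_ne_zero_iff.mpr hy)).choose_spec.2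
  have hF2 : ∀ y : Y, y ≠ 0 → ∀ x, ‖F y x‖ ≤ ‖x‖ := by
    intro y hy x
    simp only [F, dif_neg hy]
    calc ‖(exists_dual_vector 𝕜 y (norm_ne_zero_iff.mpr hy)).choose x‖ ≤ ‖(exists_dual_vector 𝕜 y (norm_ne_zero_iff.mpr hy)).choose‖ * ‖x‖ :=
        ContinuousLinearMap.le_opNorm _ _
      _ = ‖x‖ := by rw [(exists_dual_vector 𝕜 y (norm_ne_zero_iff.mpr hy)).choose_spec.1, one_mul]
  refine ⟨⟨fun x z => if z = 0 then 0 else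
      (starRingEnd 𝕜 (coef z)) * (‖rep z‖ : 𝕜) * F (rep z) x, ?_, ?_, ?_, ?_, ?_⟩⟩
  · intro x y z
    by_cases hz : z = 0 <;> simp [hz, mul_add]
  · intro a x z
    by_cases hz : z = 0
    · simp [hz]
    simp only [if_neg hz, map_smul, smul_eq_mul]
    ring
  · intro a x z
    by_cases ha : a = 0
    · simp [ha]
    by_cases hz : z = 0
    · simp [hz]
    have haz : a • z ≠ 0 := smul_ne_zero ha hz
    have hrz : rep z ≠ 0 := by
      intro h
      apply hz
      rw [← (hcoef z).2, h, smul_zero]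
    have hco : coef (a • z) = a * coef z := by
      have h1 : coef (a • z) • rep z = (a * coef z) • rep z := by
        rw [mul_smul, (hcoef z).2, ← hrep_smul a ha z, (hcoef (a • z)).2]
      have := sub_eq_zero.mpr h1
      rw [← sub_smul] at this
      rcases smul_eq_zero.mp this with h | h
      · exact sub_eq_zero.mp h
      · exact absurd h hrz
    simp only [if_neg haz, if_neg hz, hrep_smul a ha z, hco, map_mul]
    ring
  · intro x
    by_cases hx : x = 0
    · simp [hx]
    have hrx : rep x ≠ 0 := by
      intro h
      apply hx
      rw [← (hcoef x).2, h, smul_zero]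
    have : F (rep x) x = coef x * (‖rep x‖ : 𝕜) := by
      have h0 : F (rep x) x = F (rep x) (coef x • rep x) := congrArg _ (hcoef x).2.symm
      rw [h0, map_smul, hF1 _ hrx, smul_eq_mul]
    simp only [if_neg hx]
    rw [this]
    have hnx : ‖x‖ = ‖coef x‖ * ‖rep x‖ := by
      conv_lhs => rw [← (hcoef x).2, norm_smul]
    rw [hnx]
    push_cast
    rw [mul_pow]
    rw [show (starRingEnd 𝕜) (coef x) * (‖rep x‖:𝕜) * (coef x * (‖rep x‖:𝕜))
        = ((starRingEnd 𝕜) (coef x) * coef x) * ((‖rep x‖:𝕜) * (‖rep x‖:𝕜)) by ring,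
      RCLike.conj_mul]
    ring
  · intro x z
    by_cases hz : z = 0
    · simp [hz]
    have hrz : rep z ≠ 0 := by
      intro h
      apply hz
      rw [← (hcoef z).2, h, smul_zero]
    simp only [if_neg hz]
    have hnz : ‖z‖ = ‖coef z‖ * ‖rep z‖ := by conv_lhs => rw [← (hcoef z).2, norm_smul]
    calc ‖(starRingEnd 𝕜) (coef z) * (‖rep z‖ : 𝕜) * F (rep z) x‖
        = ‖coef z‖ * ‖rep z‖ * ‖F (rep z) x‖ := by
          simp [norm_mul, RCLike.norm_conj, abs_of_nonneg (norm_nonneg (rep z))]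
      _ ≤ ‖coef z‖ * ‖rep z‖ * ‖x‖ := by
          apply mul_le_mul_of_nonneg_left (hF2 _ hrz x)
          positivity
      _ = ‖x‖ * ‖z‖ := by rw [hnz]; ring

section
variable {𝕜 : Type*} [RCLike 𝕜] {k : ℕ} {X : Fin k → Type*}
    [∀ i, NormedAddCommGroup (X i)] [∀ i, NormedSpace 𝕜 (X i)]
    {Y : Type*} [NormedAddCommGroup Y] [NormedSpace 𝕜 Y]

lemma near_max (T : ContinuousMultilinearMap 𝕜 X Y) {c : ℝ} (hc0 : 0 ≤ c) (hc : c < ‖T‖) :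
    ∃ u : ∀ i, X i, (∀ i, ‖u i‖ = 1) ∧ c < ‖T u‖ := by
  by_contra h
  push_neg at h
  have : ‖T‖ ≤ c := by
    apply ContinuousMultilinearMap.opNorm_le_bound hc0
    intro m
    by_cases hm : ∃ i, m i = 0
    · obtain ⟨i, hi⟩ := hm
      rw [T.map_coord_zero i hi, norm_zero]
      positivity
    push_neg at hm
    set u : ∀ i, X i := fun i => ((‖m i‖ : 𝕜))⁻¹ • m i with hu
    have hmn : ∀ i, (‖m i‖ : 𝕜) ≠ 0 := fun i => by
      simpa using norm_ne_zero_iff.mpr (hm i)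
    have hun : ∀ i, ‖u i‖ = 1 := by
      intro i
      rw [hu]
      simp only [norm_smul, norm_inv, RCLike.norm_ofReal, abs_of_nonneg (norm_nonneg (m i))]
      rw [inv_mul_cancel₀ (norm_ne_zero_iff.mpr (hm i))]
    have hmu : m = fun i => (‖m i‖ : 𝕜) • u i := by
      funext i
      rw [hu]
      simp only [smul_smul, mul_inv_cancel₀ (hmn i), one_smul]
    have hTm : T m = (∏ i, (‖m i‖ : 𝕜)) • T u := by
      conv_lhs => rw [hmu]
      exact T.toMultilinearMap.map_smul_univ _ u
    rw [hTm, norm_smul, norm_prod]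
    have : ∏ i, ‖(‖m i‖ : 𝕜)‖ = ∏ i, ‖m i‖ := by
      congr 1; funext i
      simp [abs_of_nonneg (norm_nonneg (m i))]
    rw [this, mul_comm]
    exact mul_le_mul (h u hun) le_rfl (Finset.prod_nonneg fun i _ => norm_nonneg _) hc0
  linarith

end

theorem stmt14 {𝕜 : Type*} [RCLike 𝕜] {k : ℕ} {X : Fin k → Type*}
    [∀ i, NormedAddCommGroup (X i)] [∀ i, NormedSpace 𝕜 (X i)]
    {Y : Type*} [NormedAddCommGroup Y] [NormedSpace 𝕜 Y]
    (T : ContinuousMultilinearMap 𝕜 X Y) (hT : T ≠ 0)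
    (hyp : ∀ A : ContinuousMultilinearMap 𝕜 X Y, (∀ lam : 𝕜, ‖T‖ ≤ ‖T + lam • A‖) →
      ∀ (x : ℕ → ∀ i, X i), (∀ n i, ‖x n i‖ = 1) →
      Tendsto (fun n => ‖T (x n)‖) atTop (𝓝 ‖T‖) →
      ∀ sip : ℕ → SIP 𝕜 Y,
        Tendsto (fun n => (sip n).toFun (A (x n)) (T (x n))) atTop (𝓝 (0 : 𝕜))) :
    ∀ A₁ A₂ : ContinuousMultilinearMap 𝕜 X Y,
      (∀ lam : 𝕜, ‖T‖ ≤ ‖T + lam • A₁‖) → (∀ lam : 𝕜, ‖T‖ ≤ ‖T + lam • A₂‖) →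
      (∀ lam : 𝕜, ‖T‖ ≤ ‖T + lam • (A₁ + A₂)‖) := by
  classical
  intro A₁ A₂ hA₁ hA₂ lam
  have hTpos : 0 < ‖T‖ := by
    rw [norm_pos_iff]
    exact hT
  -- norming sequence
  have key : ∀ n : ℕ, ∃ u : ∀ i, X i, (∀ i, ‖u i‖ = 1) ∧ ‖T‖ - ‖T‖ / (n + 1) < ‖T u‖ := by
    intro n
    apply near_max
    · have h1 : ‖T‖ / (n + 1) ≤ ‖T‖ := by
        apply div_le_self hTpos.le
        have : (0 : ℝ) ≤ n := Nat.cast_nonneg n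
        linarith
      linarith
    · have : 0 < ‖T‖ / (n + 1) := by positivity
      linarith
  choose x hx1 hx2 using key
  have hxupper : ∀ n, ‖T (x n)‖ ≤ ‖T‖ := by
    intro n
    have := T.le_opNorm (x n)
    have hprod : ∏ i, ‖x n i‖ = 1 := by
      rw [Finset.prod_eq_one]
      intro i _
      exact hx1 n i
    rw [hprod, mul_one] at this
    exact this
  have hlim : Tendsto (fun n => ‖T (x n)‖) atTop (𝓝 ‖T‖) := by
    have hlow : Tendsto (fun n : ℕ => ‖T‖ - ‖T‖ / (n + 1)) atTop (𝓝 ‖T‖) := by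
      have h0 : Tendsto (fun n : ℕ => ‖T‖ / (n + 1)) atTop (𝓝 0) := by
        have := tendsto_one_div_add_atTop_nhds_zero_nat.const_mul ‖T‖
        simpa [div_eq_mul_inv, mul_comm] using this
      have := (tendsto_const_nhds (x := ‖T‖) (f := atTop (α := ℕ))).sub h0
      simpa using this
    exact tendsto_of_tendsto_of_tendsto_of_le_of_le hlow tendsto_const_nhds
      (fun n => (hx2 n).le) hxupper
  obtain ⟨sp⟩ := exists_sip 𝕜 Y
  set sip : ℕ → SIP 𝕜 Y := fun _ => sp with hsip
  have h1 := hyp A₁ hA₁ x hx1 hlim sip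
  have h2 := hyp A₂ hA₂ x hx1 hlim sip
  set S := T + lam • (A₁ + A₂) with hS
  have hfn : ∀ n, (sip n).toFun (S (x n)) (T (x n))
      = (sip n).toFun (T (x n)) (T (x n))
        + lam * (sip n).toFun (A₁ (x n)) (T (x n))
        + lam * (sip n).toFun (A₂ (x n)) (T (x n)) := by
    intro n
    have hSx : S (x n) = T (x n) + (lam • A₁ (x n) + lam • A₂ (x n)) := by
      rw [hS]
      simp [smul_add]
    rw [hSx, (sip n).add_left, (sip n).add_left, (sip n).smul_left, (sip n).smul_left]
    ring
  have hTT : Tendsto (fun n => (sip n).toFun (T (x n)) (T (x n))) atTop (𝓝 ((‖T‖ : 𝕜) ^ 2)) := by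
    have : ∀ n, (sip n).toFun (T (x n)) (T (x n)) = ((‖T (x n)‖ : ℝ) : 𝕜) ^ 2 := fun n =>
      (sip n).norm_compat _
    simp only [this]
    have hcont : Tendsto (fun n => ((‖T (x n)‖ : ℝ) : 𝕜)) atTop (𝓝 ((‖T‖ : ℝ) : 𝕜)) :=
      (RCLike.continuous_ofReal.tendsto _).comp hlim
    exact hcont.pow 2
  have hmain : Tendsto (fun n => (sip n).toFun (S (x n)) (T (x n))) atTop (𝓝 ((‖T‖ : 𝕜) ^ 2)) := by
    simp only [hfn]
    have := (hTT.add ((h1.const_mul lam))).add ((h2.const_mul lam))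
    simpa using this
  have hnormlim : Tendsto (fun n => ‖(sip n).toFun (S (x n)) (T (x n))‖) atTop (𝓝 (‖T‖ ^ 2)) := by
    have := hmain.norm
    have hval : ‖((‖T‖ : ℝ) : 𝕜) ^ 2‖ = ‖T‖ ^ 2 := by
      rw [norm_pow, RCLike.norm_ofReal, abs_of_nonneg (norm_nonneg T)]
    rwa [hval] at this
  have hb : ∀ n, ‖(sip n).toFun (S (x n)) (T (x n))‖ ≤ ‖S‖ * ‖T (x n)‖ := by
    intro n
    calc ‖(sip n).toFun (S (x n)) (T (x n))‖ ≤ ‖S (x n)‖ * ‖T (x n)‖ :=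
        (sip n).cauchy_schwarz _ _
      _ ≤ ‖S‖ * ‖T (x n)‖ := by
        apply mul_le_mul_of_nonneg_right _ (norm_nonneg _)
        have := S.le_opNorm (x n)
        have hprod : ∏ i, ‖x n i‖ = 1 := Finset.prod_eq_one fun i _ => hx1 n i
        rwa [hprod, mul_one] at this
  have hblim : Tendsto (fun n => ‖S‖ * ‖T (x n)‖) atTop (𝓝 (‖S‖ * ‖T‖)) :=
    hlim.const_mul ‖S‖
  have hineq : ‖T‖ ^ 2 ≤ ‖S‖ * ‖T‖ :=
    le_of_tendsto_of_tendsto' hnormlim hblim hb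
  rw [pow_two] at hineq
  exact le_of_mul_le_mul_right hineq hTpos
end

section
/- Let X_1, …, X_k, Y be finite-dimensional Banach spaces and T a nonzero bounded k-linear map. If T is smooth, then there exists x⃗₀ = (x_1,…,x_k) in the product of unit spheres such that M_T = { (μ^{(1)} x_1, …, μ^{(k)} x_k) : each μ^{(i)} is a unimodular scalar } and T x⃗₀ is a smooth point of Y. -/
open Filter Topology

set_option maxHeartbeats 1000000

lemma sep_pair {𝕜 E : Type*} [RCLike 𝕜] [NormedAddCommGroup E] [NormedSpace 𝕜 E]
    [FiniteDimensional 𝕜 E] {a b : E} (ha : a ∉ Submodule.span 𝕜 {b}) :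
    ∃ φ : E →L[𝕜] 𝕜, φ a = 1 ∧ φ b = 0 := by
  set p := Submodule.span 𝕜 {b}
  have hqa : p.mkQ a ≠ 0 := by
    simpa [Submodule.Quotient.mk_eq_zero, p.mkQ_apply] using ha
  obtain ⟨g, hg⟩ : ∃ g : Module.Dual 𝕜 (E ⧸ p), g (p.mkQ a) ≠ 0 := by
    by_contra h
    push_neg at h
    exact hqa ((Module.forall_dual_apply_eq_zero_iff 𝕜 _).mp h)
  set ψ : E →ₗ[𝕜] 𝕜 := (g (p.mkQ a))⁻¹ • (g.comp p.mkQ)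
  have hψa : ψ a = 1 := by
    simp only [ψ, LinearMap.smul_apply, LinearMap.comp_apply, smul_eq_mul]
    exact inv_mul_cancel₀ hg
  have hψb : ψ b = 0 := by
    have hb : p.mkQ b = 0 := by
      simp [p, Submodule.Quotient.mk_eq_zero, Submodule.mem_span_singleton_self]
    simp [ψ, hb]
  exact ⟨LinearMap.toContinuousLinearMap ψ, hψa, hψb⟩

lemma attain {𝕜 : Type*} [RCLike 𝕜] {k : ℕ} {X : Fin k → Type*}
    [∀ i, NormedAddCommGroup (X i)] [∀ i, NormedSpace 𝕜 (X i)]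
    [∀ i, FiniteDimensional 𝕜 (X i)]
    {Y : Type*} [NormedAddCommGroup Y] [NormedSpace 𝕜 Y]
    (S : ContinuousMultilinearMap 𝕜 X Y) (e : ∀ i, X i) (he : ∀ i, ‖e i‖ = 1) :
    ∃ x : ∀ i, X i, (∀ i, ‖x i‖ = 1) ∧ ‖S x‖ = ‖S‖ := by
  set K : Set (∀ i, X i) := Set.pi Set.univ fun i => Metric.sphere (0 : X i) 1 with hK
  haveI : ∀ i, ProperSpace (X i) := fun i => FiniteDimensional.proper 𝕜 (X i)
  have hKc : IsCompact K := isCompact_univ_pi fun i => isCompact_sphere _ _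
  have heK : e ∈ K := by
    intro i _
    simpa [mem_sphere_zero_iff_norm] using he i
  obtain ⟨x₀, hx₀K, hmax⟩ := hKc.exists_isMaxOn ⟨e, heK⟩
    ((S.coe_continuous.norm).continuousOn)
  have hx₀ : ∀ i, ‖x₀ i‖ = 1 := by
    intro i
    have := hx₀K i (Set.mem_univ i)
    simpa [mem_sphere_zero_iff_norm] using this
  refine ⟨x₀, hx₀, le_antisymm ?_ ?_⟩
  · calc ‖S x₀‖ ≤ ‖S‖ * ∏ i, ‖x₀ i‖ := S.le_opNorm x₀
      _ = ‖S‖ := by simp [hx₀]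
  · refine S.opNorm_le_bound (norm_nonneg _) fun m => ?_
    by_cases hm : ∃ i, m i = 0
    · obtain ⟨i, hi⟩ := hm
      rw [S.map_coord_zero i hi]
      simp only [norm_zero]
      positivity
    · push_neg at hm
      set m' : ∀ i, X i := fun i => ((‖m i‖ : 𝕜))⁻¹ • m i with hm'
      have hm'K : m' ∈ K := by
        intro i _
        have h0 : ‖m i‖ ≠ 0 := norm_ne_zero_iff.mpr (hm i)
        simp [hm', mem_sphere_zero_iff_norm, norm_smul, norm_inv, RCLike.norm_ofReal,
          abs_of_nonneg (norm_nonneg (m i)), inv_mul_cancel₀ h0]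
      have hle : ‖S m'‖ ≤ ‖S x₀‖ := hmax hm'K
      have hmeq : m = fun i => ((‖m i‖ : 𝕜)) • m' i := by
        funext i
        have h0 : ((‖m i‖ : 𝕜)) ≠ 0 := by
          simpa using norm_ne_zero_iff.mpr (hm i)
        simp [hm', smul_smul, mul_inv_cancel₀ h0]
      have hSm : S m = (∏ i, ((‖m i‖ : 𝕜))) • S m' := by
        conv_lhs => rw [hmeq]
        exact S.map_smul_univ _ m'
      have hnorm : ‖S m‖ = (∏ i, ‖m i‖) * ‖S m'‖ := by
        rw [hSm, norm_smul]
        congr 1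
        rw [← RCLike.ofReal_prod, RCLike.norm_ofReal,
          abs_of_nonneg (Finset.prod_nonneg fun i _ => norm_nonneg _)]
      rw [hnorm, mul_comm]
      exact mul_le_mul_of_nonneg_right hle (Finset.prod_nonneg fun i _ => norm_nonneg _)

theorem stmt16 {𝕜 : Type*} [RCLike 𝕜] {k : ℕ} {X : Fin k → Type*}
    [∀ i, NormedAddCommGroup (X i)] [∀ i, NormedSpace 𝕜 (X i)]
    [∀ i, FiniteDimensional 𝕜 (X i)]
    {Y : Type*} [NormedAddCommGroup Y] [NormedSpace 𝕜 Y] [FiniteDimensional 𝕜 Y]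
    (T : ContinuousMultilinearMap 𝕜 X Y) (hT : T ≠ 0)
    (hsmooth : ∀ A₁ A₂ : ContinuousMultilinearMap 𝕜 X Y,
      (∀ lam : 𝕜, ‖T‖ ≤ ‖T + lam • A₁‖) → (∀ lam : 𝕜, ‖T‖ ≤ ‖T + lam • A₂‖) →
      (∀ lam : 𝕜, ‖T‖ ≤ ‖T + lam • (A₁ + A₂)‖)) :
    ∃ x₀ : ∀ i, X i, (∀ i, ‖x₀ i‖ = 1) ∧
      {x : ∀ i, X i | (∀ i, ‖x i‖ = 1) ∧ ‖T x‖ = ‖T‖}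
        = {x : ∀ i, X i | ∃ μ : Fin k → 𝕜, (∀ i, ‖μ i‖ = 1) ∧ x = fun i => μ i • x₀ i} ∧
      (∃! y : Y →L[𝕜] 𝕜, ‖y‖ = 1 ∧ y (T x₀) = (‖T x₀‖ : 𝕜)) := by
  classical
  have hTpos : (0:ℝ) < ‖T‖ := norm_pos_iff.mpr hT
  -- each coordinate space has a unit vector
  have hnz : ∀ i, ∃ v : X i, ‖v‖ = 1 := by
    intro i
    by_contra h
    push_neg at h
    have hzero : ∀ v : X i, v = 0 := by
      intro v
      by_contra hv
      refine h (((‖v‖ : 𝕜))⁻¹ • v) ?_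
      have h0 : ‖v‖ ≠ 0 := norm_ne_zero_iff.mpr hv
      simp [norm_smul, RCLike.norm_ofReal, abs_of_nonneg (norm_nonneg v),
        inv_mul_cancel₀ h0]
    apply hT
    ext m
    rw [T.map_coord_zero i (hzero (m i))]
    rfl
  choose e he using hnz
  obtain ⟨x₀, hx₀1, hx₀2⟩ := attain T e he
  have keyLB : ∀ (S : ContinuousMultilinearMap 𝕜 X Y) (z : ∀ i, X i),
      (∀ i, ‖z i‖ = 1) → ‖S z‖ ≤ ‖S‖ := by
    intro S z hz
    calc ‖S z‖ ≤ ‖S‖ * ∏ i, ‖z i‖ := S.le_opNorm z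
      _ = ‖S‖ := by simp [hz]
  have hx0ne : ∀ i, x₀ i ≠ 0 := by
    intro i h
    have := hx₀1 i
    rw [h] at this
    simp at this
  -- Step A: any other norming point is coordinatewise parallel to x₀
  have hpar : ∀ z : ∀ i, X i, (∀ i, ‖z i‖ = 1) → ‖T z‖ = ‖T‖ →
      ∀ i, ∃ μ : 𝕜, ‖μ‖ = 1 ∧ z i = μ • x₀ i := by
    intro z hz1 hz2 i
    by_contra hcon
    push_neg at hcon
    have hall : ∀ c : 𝕜, z i ≠ c • x₀ i := by
      intro c hc
      have hc1 : ‖c‖ = 1 := by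
        have h := hz1 i
        rw [hc, norm_smul, hx₀1 i, mul_one] at h
        exact h
      exact hcon c hc1 hc
    have hnmem : x₀ i ∉ Submodule.span 𝕜 {z i} := by
      intro hmem
      obtain ⟨d, hd⟩ := Submodule.mem_span_singleton.mp hmem
      have hd0 : d ≠ 0 := by
        rintro rfl
        rw [zero_smul] at hd
        exact hx0ne i hd.symm
      exact hall d⁻¹ (by rw [← hd, smul_smul, inv_mul_cancel₀ hd0, one_smul])
    obtain ⟨φ, hφ1, hφ2⟩ := sep_pair (𝕜 := 𝕜) hnmem
    set L : ∀ j, X j →L[𝕜] X j :=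
      Function.update (fun j => ContinuousLinearMap.id 𝕜 (X j)) i (φ.smulRight (x₀ i)) with hL
    set B : ContinuousMultilinearMap 𝕜 X Y := T.compContinuousLinearMap L with hB
    have hLi : L i = φ.smulRight (x₀ i) := Function.update_self _ _ _
    have hLj : ∀ j, j ≠ i → L j = ContinuousLinearMap.id 𝕜 (X j) := fun j hj =>
      Function.update_of_ne hj _ _
    have hBz : B z = 0 := by
      rw [hB, ContinuousMultilinearMap.compContinuousLinearMap_apply]
      apply T.map_coord_zero i
      show L i (z i) = 0
      rw [hLi]
      simp [hφ2]
    have hBx : B x₀ = T x₀ := by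
      rw [hB, ContinuousMultilinearMap.compContinuousLinearMap_apply]
      congr 1
      funext j
      by_cases hj : j = i
      · subst hj
        rw [hLi]
        simp [hφ1]
      · rw [hLj j hj]
        rfl
    have h1 : ∀ lam : 𝕜, ‖T‖ ≤ ‖T + lam • B‖ := by
      intro lam
      have happ : (T + lam • B) z = T z := by
        simp [ContinuousMultilinearMap.add_apply, ContinuousMultilinearMap.smul_apply, hBz]
      calc ‖T‖ = ‖(T + lam • B) z‖ := by rw [happ, hz2]
        _ ≤ ‖T + lam • B‖ := keyLB _ z hz1
    have h2 : ∀ lam : 𝕜, ‖T‖ ≤ ‖T + lam • (T - B)‖ := by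
      intro lam
      have happ : (T + lam • (T - B)) x₀ = T x₀ := by
        simp [ContinuousMultilinearMap.add_apply, ContinuousMultilinearMap.smul_apply,
          ContinuousMultilinearMap.sub_apply, hBx]
      calc ‖T‖ = ‖(T + lam • (T - B)) x₀‖ := by rw [happ, hx₀2]
        _ ≤ _ := keyLB _ x₀ hx₀1
    have hfin := hsmooth B (T - B) h1 h2 (-1)
    have hBT : B + (T - B) = T := by abel
    rw [hBT] at hfin
    have hzero : T + (-1 : 𝕜) • T = 0 := by
      rw [neg_one_smul]
      abel
    rw [hzero, norm_zero] at hfin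
    exact absurd hfin (not_le.mpr hTpos)
  -- setup for second part
  set u : Y := T x₀ with hu
  have hu2 : ‖u‖ = ‖T‖ := hx₀2
  have hu0 : u ≠ 0 := by
    intro h
    rw [h, norm_zero] at hu2
    exact absurd hu2.symm (ne_of_gt hTpos)
  have hφv : ∀ i, ∃ φ : X i →L[𝕜] 𝕜, φ (x₀ i) = 1 := fun i =>
    SeparatingDual.exists_eq_one (hx0ne i)
  choose φv hφv1 using hφv
  set Φ : ContinuousMultilinearMap 𝕜 X 𝕜 :=
    (ContinuousMultilinearMap.mkPiAlgebra 𝕜 (Fin k) 𝕜).compContinuousLinearMap φv with hΦdef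
  have hΦapp : ∀ v, Φ v = ∏ i, φv i (v i) := by
    intro v
    rw [hΦdef, ContinuousMultilinearMap.compContinuousLinearMap_apply,
      ContinuousMultilinearMap.mkPiAlgebra_apply]
  have horb : ∀ z : ∀ i, X i, (∀ i, ‖z i‖ = 1) → ‖T z‖ = ‖T‖ → T z = Φ z • u := by
    intro z hz1 hz2
    choose μ hμ1 hμ2 using hpar z hz1 hz2
    have hzeq : z = fun i => μ i • x₀ i := funext hμ2
    have hscal : ∀ i, φv i (μ i • x₀ i) = μ i := by
      intro i
      rw [map_smul, hφv1 i, smul_eq_mul, mul_one]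
    rw [hzeq, T.map_smul_univ μ x₀, hΦapp]
    simp only [hscal]
    rfl
  set A : ContinuousMultilinearMap 𝕜 X Y := Φ.smulRight u with hAdef
  have hAapp : ∀ v, A v = Φ v • u := by
    intro v
    rw [hAdef, ContinuousMultilinearMap.smulRight_apply]
  -- core lemma: the norm strictly decreases along -A
  have hC : ∃ t : ℝ, 0 < t ∧ ‖T - (t : 𝕜) • A‖ < ‖T‖ := by
    by_contra hc
    push_neg at hc
    set t : ℕ → ℝ := fun n => 1 / (n + 1) with ht
    have htpos : ∀ n, 0 < t n := by
      intro n
      have : (0:ℝ) < (n:ℝ) + 1 := by positivity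
      simpa [ht] using this
    have hSx : ∀ n, ∃ x : ∀ i, X i, (∀ i, ‖x i‖ = 1) ∧
        ‖(T - (t n : 𝕜) • A) x‖ = ‖T - (t n : 𝕜) • A‖ :=
      fun n => attain _ e he
    choose x hx1 hx2 using hSx
    have hxlb : ∀ n, ‖T‖ ≤ ‖(T - (t n : 𝕜) • A) (x n)‖ := fun n =>
      le_trans (hc (t n) (htpos n)) (hx2 n).ge
    have hyne : ∀ n, (T - (t n : 𝕜) • A) (x n) ≠ 0 := by
      intro n h
      have := hxlb n
      rw [h, norm_zero] at this
      exact absurd this (not_le.mpr hTpos)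
    have hfex : ∀ n, ∃ f : Y →L[𝕜] 𝕜, ‖f‖ = 1 ∧
        f ((T - (t n : 𝕜) • A) (x n)) = ‖(T - (t n : 𝕜) • A) (x n)‖ :=
      fun n => exists_dual_vector 𝕜 _ (norm_ne_zero_iff.mpr (hyne n))
    choose f hf1 hf2 using hfex
    have hsign : ∀ n, RCLike.re (f n (A (x n))) ≤ 0 := by
      intro n
      have e1 : f n ((T - (t n : 𝕜) • A) (x n))
          = f n (T (x n)) - (t n : 𝕜) * f n (A (x n)) := by
        simp [ContinuousMultilinearMap.sub_apply, ContinuousMultilinearMap.smul_apply,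
          map_sub, map_smul, smul_eq_mul]
      have e2 : RCLike.re (f n (T (x n))) ≤ ‖T‖ := by
        calc RCLike.re (f n (T (x n))) ≤ ‖f n (T (x n))‖ := RCLike.re_le_norm _
          _ ≤ ‖f n‖ * ‖T (x n)‖ := (f n).le_opNorm _
          _ = ‖T (x n)‖ := by rw [hf1 n, one_mul]
          _ ≤ ‖T‖ := keyLB T (x n) (hx1 n)
      have e3 : ‖T‖ ≤ RCLike.re (f n ((T - (t n : 𝕜) • A) (x n))) := by
        rw [hf2 n, RCLike.ofReal_re]
        exact hxlb n
      rw [e1, map_sub, RCLike.re_ofReal_mul] at e3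
      nlinarith [htpos n]
    haveI : ∀ i, ProperSpace (X i) := fun i => FiniteDimensional.proper 𝕜 (X i)
    haveI : ProperSpace (Y →L[𝕜] 𝕜) := FiniteDimensional.proper 𝕜 _
    set K : Set (∀ i, X i) := Set.pi Set.univ fun i => Metric.sphere (0 : X i) 1 with hKdef
    have hKc : IsCompact K := isCompact_univ_pi fun i => isCompact_sphere _ _
    have hxK : ∀ n, x n ∈ K := fun n i _ => by
      simpa [mem_sphere_zero_iff_norm] using hx1 n i
    obtain ⟨z, hzK, ψ, hψmono, hψlim⟩ := hKc.tendsto_subseq hxK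
    have hfS : ∀ n, f (ψ n) ∈ Metric.sphere (0 : Y →L[𝕜] 𝕜) 1 := fun n => by
      simpa [mem_sphere_zero_iff_norm] using hf1 (ψ n)
    obtain ⟨g, hgS, ψ₂, hψ₂mono, hψ₂lim⟩ := (isCompact_sphere _ _).tendsto_subseq hfS
    set σ : ℕ → ℕ := ψ ∘ ψ₂ with hσ
    have hσmono : StrictMono σ := hψmono.comp hψ₂mono
    have hσx : Tendsto (fun n => x (σ n)) atTop (𝓝 z) :=
      hψlim.comp hψ₂mono.tendsto_atTop
    have hσf : Tendsto (fun n => f (σ n)) atTop (𝓝 g) := hψ₂lim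
    have hσt : Tendsto (fun n => t (σ n)) atTop (𝓝 0) :=
      tendsto_one_div_add_atTop_nhds_zero_nat.comp hσmono.tendsto_atTop
    have hz1 : ∀ i, ‖z i‖ = 1 := fun i => by
      have := hzK i (Set.mem_univ i)
      simpa [mem_sphere_zero_iff_norm] using this
    have hTx : Tendsto (fun n => T (x (σ n))) atTop (𝓝 (T z)) :=
      (T.cont.tendsto z).comp hσx
    have hAx : Tendsto (fun n => A (x (σ n))) atTop (𝓝 (A z)) :=
      (A.cont.tendsto z).comp hσx
    have happly : ∀ {w : ℕ → Y} {w₀ : Y}, Tendsto w atTop (𝓝 w₀) →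
        Tendsto (fun n => f (σ n) (w n)) atTop (𝓝 (g w₀)) := by
      intro w w₀ hw
      have hp : Tendsto (fun n => (f (σ n), w n)) atTop (𝓝 (g, w₀)) :=
        hσf.prodMk_nhds hw
      exact (isBoundedBilinearMap_apply.continuous.tendsto (g, w₀)).comp hp
    have hyσ : Tendsto (fun n => (T - (t (σ n) : 𝕜) • A) (x (σ n))) atTop (𝓝 (T z)) := by
      have h1 : Tendsto (fun n => ((t (σ n) : ℝ) : 𝕜)) atTop (𝓝 (0:𝕜)) := by
        have := (RCLike.continuous_ofReal (K := 𝕜)).tendsto (0:ℝ)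
        simpa [Function.comp_def] using this.comp hσt
      have h2 : Tendsto (fun n => T (x (σ n)) - ((t (σ n) : ℝ) : 𝕜) • A (x (σ n)))
          atTop (𝓝 (T z - (0:𝕜) • A z)) := hTx.sub (h1.smul hAx)
      simpa [ContinuousMultilinearMap.sub_apply, ContinuousMultilinearMap.smul_apply]
        using h2
    have hge : ‖T‖ ≤ RCLike.re (g (T z)) := by
      have hlim : Tendsto (fun n => RCLike.re (f (σ n) ((T - (t (σ n) : 𝕜) • A) (x (σ n)))))
          atTop (𝓝 (RCLike.re (g (T z)))) :=
        (RCLike.continuous_re.tendsto _).comp (happly hyσ)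
      refine ge_of_tendsto hlim (Filter.Eventually.of_forall fun n => ?_)
      rw [hf2 (σ n), RCLike.ofReal_re]
      exact hxlb (σ n)
    have hle0 : RCLike.re (g (A z)) ≤ 0 := by
      have hlim : Tendsto (fun n => RCLike.re (f (σ n) (A (x (σ n)))))
          atTop (𝓝 (RCLike.re (g (A z)))) :=
        (RCLike.continuous_re.tendsto _).comp (happly hAx)
      exact le_of_tendsto hlim (Filter.Eventually.of_forall fun n => hsign (σ n))
    have hg1 : ‖g‖ = 1 := by simpa [mem_sphere_zero_iff_norm] using hgS
    have hzM : ‖T z‖ = ‖T‖ := by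
      refine le_antisymm (keyLB T z hz1) ?_
      calc ‖T‖ ≤ RCLike.re (g (T z)) := hge
        _ ≤ ‖g (T z)‖ := RCLike.re_le_norm _
        _ ≤ ‖g‖ * ‖T z‖ := g.le_opNorm _
        _ = ‖T z‖ := by rw [hg1, one_mul]
    have hAz : A z = T z := by
      rw [hAapp z]
      exact (horb z hz1 hzM).symm
    rw [hAz] at hle0
    linarith
  obtain ⟨t₀, ht₀, hlt⟩ := hC
  obtain ⟨f₀, hf₀1, hf₀2⟩ := exists_dual_vector 𝕜 u (norm_ne_zero_iff.mpr hu0)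
  have hΦx₀ : Φ x₀ = 1 := by
    rw [hΦapp]
    simp [hφv1]
  set c : 𝕜 := (‖u‖ : 𝕜) with hcdef
  have hc0 : c ≠ 0 := by
    rw [hcdef]
    exact_mod_cast RCLike.ofReal_ne_zero.mpr (norm_ne_zero_iff.mpr hu0)
  -- uniqueness of the support functional
  have huniq : ∀ y₁ : Y →L[𝕜] 𝕜, (‖y₁‖ = 1 ∧ y₁ u = (‖u‖ : 𝕜)) → y₁ = f₀ := by
    rintro y₁ ⟨hy₁, hy₂⟩
    by_contra hne
    have hex : ∃ v : Y, y₁ v ≠ f₀ v := by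
      by_contra hh
      push_neg at hh
      exact hne (ContinuousLinearMap.ext hh)
    obtain ⟨v, hv⟩ := hex
    set w' : Y := v - (c⁻¹ * y₁ v) • u with hw'def
    have hw'y₁ : y₁ w' = 0 := by
      rw [hw'def, map_sub, map_smul, hy₂, ← hcdef, smul_eq_mul]
      field_simp
      simp
    have hw'f₀ne : f₀ w' ≠ 0 := by
      rw [hw'def, map_sub, map_smul, hf₀2, smul_eq_mul]
      have : c⁻¹ * y₁ v * c = y₁ v := by field_simp
      rw [this]
      exact sub_ne_zero_of_ne (Ne.symm hv)
    set w : Y := (f₀ w')⁻¹ • w' with hwdef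
    have hwy₁ : y₁ w = 0 := by
      rw [hwdef, map_smul, hw'y₁, smul_zero]
    have hwf₀ : f₀ w = 1 := by
      rw [hwdef, map_smul, smul_eq_mul]
      exact inv_mul_cancel₀ hw'f₀ne
    set A₁ : ContinuousMultilinearMap 𝕜 X Y := Φ.smulRight w with hA₁def
    set A₂ : ContinuousMultilinearMap 𝕜 X Y := Φ.smulRight (c⁻¹ • u - w) with hA₂def
    have h1 : ∀ lam : 𝕜, ‖T‖ ≤ ‖T + lam • A₁‖ := by
      intro lam
      have happ : y₁ ((T + lam • A₁) x₀) = c := by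
        rw [ContinuousMultilinearMap.add_apply, ContinuousMultilinearMap.smul_apply,
          hA₁def, ContinuousMultilinearMap.smulRight_apply, hΦx₀, one_smul,
          map_add, map_smul, hwy₁, smul_zero, add_zero, ← hu, hy₂, hcdef]
      have hnc : ‖c‖ = ‖T‖ := by
        rw [hcdef, RCLike.norm_ofReal, abs_of_nonneg (norm_nonneg u), hu2]
      calc ‖T‖ = ‖y₁ ((T + lam • A₁) x₀)‖ := by rw [happ, hnc]
        _ ≤ ‖y₁‖ * ‖(T + lam • A₁) x₀‖ := y₁.le_opNorm _
        _ = ‖(T + lam • A₁) x₀‖ := by rw [hy₁, one_mul]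
        _ ≤ ‖T + lam • A₁‖ := keyLB _ x₀ hx₀1
    have h2 : ∀ lam : 𝕜, ‖T‖ ≤ ‖T + lam • A₂‖ := by
      intro lam
      have hf₀A₂ : f₀ (c⁻¹ • u - w) = 0 := by
        rw [map_sub, map_smul, hf₀2, hwf₀, smul_eq_mul, inv_mul_cancel₀ hc0,
          sub_self]
      have happ : f₀ ((T + lam • A₂) x₀) = c := by
        rw [ContinuousMultilinearMap.add_apply, ContinuousMultilinearMap.smul_apply,
          hA₂def, ContinuousMultilinearMap.smulRight_apply, hΦx₀, one_smul,
          map_add, map_smul, hf₀A₂, smul_zero, add_zero, ← hu, hf₀2, hcdef]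
      have hnc : ‖c‖ = ‖T‖ := by
        rw [hcdef, RCLike.norm_ofReal, abs_of_nonneg (norm_nonneg u), hu2]
      calc ‖T‖ = ‖f₀ ((T + lam • A₂) x₀)‖ := by rw [happ, hnc]
        _ ≤ ‖f₀‖ * ‖(T + lam • A₂) x₀‖ := f₀.le_opNorm _
        _ = ‖(T + lam • A₂) x₀‖ := by rw [hf₀1, one_mul]
        _ ≤ ‖T + lam • A₂‖ := keyLB _ x₀ hx₀1
    have hsum : A₁ + A₂ = c⁻¹ • A := by
      ext v'
      rw [ContinuousMultilinearMap.add_apply, ContinuousMultilinearMap.smul_apply,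
        hA₁def, hA₂def, hAdef]
      rw [ContinuousMultilinearMap.smulRight_apply, ContinuousMultilinearMap.smulRight_apply,
        ContinuousMultilinearMap.smulRight_apply]
      rw [smul_sub, ← add_sub_assoc, add_sub_cancel_left, smul_smul, smul_smul, mul_comm]
    have hfin := hsmooth A₁ A₂ h1 h2 (-(t₀ : 𝕜) * c)
    rw [hsum] at hfin
    have hls : (-(t₀ : 𝕜) * c) • (c⁻¹ • A) = -((t₀ : 𝕜) • A) := by
      rw [smul_smul, ← neg_smul]
      congr 1
      field_simp
    rw [hls, ← sub_eq_add_neg] at hfin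
    exact absurd hfin (not_le.mpr hlt)
  -- assemble
  refine ⟨x₀, hx₀1, ?_, ⟨f₀, ⟨hf₀1, hf₀2⟩, fun y₁ hy₁ => huniq y₁ hy₁⟩⟩
  ext zz
  simp only [Set.mem_setOf_eq]
  constructor
  · rintro ⟨hz1, hz2⟩
    choose μ hμ1 hμ2 using hpar zz hz1 hz2
    exact ⟨μ, hμ1, funext hμ2⟩
  · rintro ⟨μ, hμ1, rfl⟩
    refine ⟨fun i => by rw [norm_smul, hμ1 i, hx₀1 i, mul_one], ?_⟩
    rw [T.map_smul_univ μ x₀, norm_smul, ← hu, hu2]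
    have : ‖∏ i, μ i‖ = 1 := by
      rw [norm_prod]
      simp [hμ1]
    rw [this, one_mul]
end

section
/- Let X_1, …, X_k, Y be finite-dimensional Banach spaces and T a nonzero bounded k-linear map. Suppose there exists x⃗₀ = (x_1,…,x_k) in the product of unit spheres such that M_T = { (μ^{(1)} x_1, …, μ^{(k)} x_k) : each μ^{(i)} unimodular } and T x⃗₀ is a smooth point of Y with unique support functional y₀*. Then for every bounded k-linear map A, the set Ω'(T,A) := { y*(A x⃗) : x⃗ ∈ M_T, y* ∈ J(T x⃗) } equals the singleton { y₀*(A x⃗₀) }. -/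
theorem stmt17 {𝕜 : Type*} [RCLike 𝕜] {k : ℕ} {X : Fin k → Type*}
    [∀ i, NormedAddCommGroup (X i)] [∀ i, NormedSpace 𝕜 (X i)]
    [∀ i, FiniteDimensional 𝕜 (X i)]
    {Y : Type*} [NormedAddCommGroup Y] [NormedSpace 𝕜 Y] [FiniteDimensional 𝕜 Y]
    (T : ContinuousMultilinearMap 𝕜 X Y) (hT : T ≠ 0)
    (x₀ : ∀ i, X i) (hx₀ : ∀ i, ‖x₀ i‖ = 1)
    (hM : {x : ∀ i, X i | (∀ i, ‖x i‖ = 1) ∧ ‖T x‖ = ‖T‖}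
        = {x : ∀ i, X i | ∃ μ : Fin k → 𝕜, (∀ i, ‖μ i‖ = 1) ∧ x = fun i => μ i • x₀ i})
    (y₀ : Y →L[𝕜] 𝕜) (hy₀ : ‖y₀‖ = 1 ∧ y₀ (T x₀) = (‖T x₀‖ : 𝕜))
    (huniq : ∀ y : Y →L[𝕜] 𝕜, ‖y‖ = 1 ∧ y (T x₀) = (‖T x₀‖ : 𝕜) → y = y₀) :
    ∀ A : ContinuousMultilinearMap 𝕜 X Y,
      {lam : 𝕜 | ∃ (x : ∀ i, X i) (y : Y →L[𝕜] 𝕜),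
        (∀ i, ‖x i‖ = 1) ∧ ‖T x‖ = ‖T‖ ∧ ‖y‖ = 1 ∧
        y (T x) = (‖T x‖ : 𝕜) ∧ lam = y (A x)} = {y₀ (A x₀)} := by
  intro A
  -- x₀ is norm-attaining
  have hx₀M : (∀ i, ‖x₀ i‖ = 1) ∧ ‖T x₀‖ = ‖T‖ := by
    have : x₀ ∈ {x : ∀ i, X i | ∃ μ : Fin k → 𝕜, (∀ i, ‖μ i‖ = 1) ∧
        x = fun i => μ i • x₀ i} := ⟨fun _ => 1, fun i => by simp, by funext i; simp⟩
    rw [← hM] at this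
    exact this
  ext lam
  simp only [Set.mem_setOf_eq, Set.mem_singleton_iff]
  constructor
  · rintro ⟨x, y, hx1, hx2, hy1, hy2, rfl⟩
    have hxM : x ∈ {x : ∀ i, X i | ∃ μ : Fin k → 𝕜, (∀ i, ‖μ i‖ = 1) ∧
        x = fun i => μ i • x₀ i} := by rw [← hM]; exact ⟨hx1, hx2⟩
    obtain ⟨μ, hμ, rfl⟩ := hxM
    set c : 𝕜 := ∏ i, μ i with hc
    have hcnorm : ‖c‖ = 1 := by
      rw [hc, norm_prod]
      simp [hμ]
    have hTx : T (fun i => μ i • x₀ i) = c • T x₀ := by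
      rw [hc]
      exact T.toMultilinearMap.map_smul_univ μ x₀
    have hAx : A (fun i => μ i • x₀ i) = c • A x₀ := by
      rw [hc]
      exact A.toMultilinearMap.map_smul_univ μ x₀
    have hnormTx : ‖T (fun i => μ i • x₀ i)‖ = ‖T x₀‖ := by
      rw [hTx, norm_smul, hcnorm, one_mul]
    have hy' : (c • y : Y →L[𝕜] 𝕜) = y₀ := by
      apply huniq
      constructor
      · rw [show ‖c • y‖ = ‖c‖ * ‖y‖ from norm_smul c y, hcnorm, hy1, one_mul]
      · have : y (T (fun i => μ i • x₀ i)) = c * y (T x₀) := by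
          rw [hTx, map_smul, smul_eq_mul]
        rw [ContinuousLinearMap.smul_apply, smul_eq_mul, ← this, hy2, hnormTx]
    calc y (A fun i => μ i • x₀ i) = c * y (A x₀) := by
          rw [hAx, map_smul, smul_eq_mul]
      _ = (c • y : Y →L[𝕜] 𝕜) (A x₀) := by
          rw [ContinuousLinearMap.smul_apply, smul_eq_mul]
      _ = y₀ (A x₀) := by rw [hy']
  · rintro rfl
    exact ⟨x₀, y₀, hx₀M.1, hx₀M.2, hy₀.1, by rw [hy₀.2], rfl⟩
end

section
/- Let X_1, …, X_k, Y be finite-dimensional Banach spaces and T a nonzero smooth bounded k-linear map. Then for every bounded k-linear map A with T ⊥_B A, there exists x⃗₀ ∈ M_T (i.e., ‖T x⃗₀‖ = ‖T‖ with unit-sphere components) such that T x⃗₀ ⊥_B A x⃗₀ in Y. -/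
lemma attain18 {𝕜 : Type*} [RCLike 𝕜] {k : ℕ} {X : Fin k → Type*}
    [∀ i, NormedAddCommGroup (X i)] [∀ i, NormedSpace 𝕜 (X i)]
    [∀ i, FiniteDimensional 𝕜 (X i)]
    {Y : Type*} [NormedAddCommGroup Y] [NormedSpace 𝕜 Y]
    (T : ContinuousMultilinearMap 𝕜 X Y) (hT : T ≠ 0) :
    ∃ x₀ : ∀ i, X i, (∀ i, ‖x₀ i‖ = 1) ∧ ‖T x₀‖ = ‖T‖ := by
  classical
  haveI : ∀ i, ProperSpace (X i) := fun i => FiniteDimensional.proper 𝕜 (X i)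
  set K : Set (∀ i, X i) := Set.univ.pi (fun i => Metric.closedBall 0 1) with hK
  have hKc : IsCompact K := isCompact_univ_pi (fun i => isCompact_closedBall 0 1)
  have hK0 : (0 : ∀ i, X i) ∈ K := by
    intro i _; simp
  have hcont : ContinuousOn (fun x : ∀ i, X i => ‖T x‖) K :=
    (T.cont.norm).continuousOn
  obtain ⟨x, hxK, hx⟩ := hKc.exists_isMaxOn ⟨0, hK0⟩ hcont
  have hxball : ∀ i, ‖x i‖ ≤ 1 := by
    intro i
    have := hxK i (Set.mem_univ i)
    simpa using this
  have hTle : ‖T‖ ≤ ‖T x‖ := by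
    refine (T.opNorm_le_iff (norm_nonneg _)).mpr ?_
    intro m
    by_cases hm : ∃ i, m i = 0
    · obtain ⟨i, hi⟩ := hm
      rw [T.map_coord_zero i hi, norm_zero]
      positivity
    · push_neg at hm
      set u : ∀ i, X i := fun i => ((‖m i‖ : 𝕜))⁻¹ • m i with hu
      have huK : u ∈ K := by
        intro i _
        have hmi : ‖m i‖ ≠ 0 := norm_ne_zero_iff.mpr (hm i)
        simp [hu, norm_smul, hmi]
      have hTu : T u = (∏ i, ((‖m i‖ : 𝕜))⁻¹) • T m := by
        simpa [hu] using T.map_smul_univ (fun i => ((‖m i‖ : 𝕜))⁻¹) m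
      have hnorm : ‖T u‖ = (∏ i, ‖m i‖)⁻¹ * ‖T m‖ := by
        rw [hTu, norm_smul]
        congr 1
        rw [← Finset.prod_inv_distrib]
        rw [norm_prod]
        congr 1
        ext i
        simp
      have hle : ‖T u‖ ≤ ‖T x‖ := hx huK
      have hprodpos : (0:ℝ) < ∏ i, ‖m i‖ :=
        Finset.prod_pos (fun i _ => norm_pos_iff.mpr (hm i))
      rw [hnorm] at hle
      calc ‖T m‖ = ((∏ i, ‖m i‖)⁻¹ * ‖T m‖) * ∏ i, ‖m i‖ := by
            field_simp
        _ ≤ ‖T x‖ * ∏ i, ‖m i‖ := by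
            apply mul_le_mul_of_nonneg_right hle hprodpos.le
  have hTpos : (0:ℝ) < ‖T‖ := norm_pos_iff.mpr hT
  have hTx0 : ∀ i, x i ≠ 0 := by
    intro i hxi
    rw [T.map_coord_zero i hxi] at hTle
    simp at hTle
    exact hT hTle
  refine ⟨fun i => ((‖x i‖ : 𝕜))⁻¹ • x i, ?_, ?_⟩
  · intro i
    have : ‖x i‖ ≠ 0 := norm_ne_zero_iff.mpr (hTx0 i)
    simp [norm_smul, this]
  · set y : ∀ i, X i := fun i => ((‖x i‖ : 𝕜))⁻¹ • x i with hy
    have hynorm : ∀ i, ‖y i‖ = 1 := by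
      intro i
      have : ‖x i‖ ≠ 0 := norm_ne_zero_iff.mpr (hTx0 i)
      simp [hy, norm_smul, this]
    have hTy : T y = (∏ i, ((‖x i‖ : 𝕜))⁻¹) • T x := by
      simpa [hy] using T.map_smul_univ (fun i => ((‖x i‖ : 𝕜))⁻¹) x
    have hnormy : ‖T y‖ = (∏ i, ‖x i‖)⁻¹ * ‖T x‖ := by
      rw [hTy, norm_smul]
      congr 1
      rw [← Finset.prod_inv_distrib, norm_prod]
      congr 1; ext i; simp
    have hprodle : ∏ i, ‖x i‖ ≤ 1 :=
      Finset.prod_le_one (fun i _ => norm_nonneg _) (fun i _ => hxball i)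
    have hprodpos : (0:ℝ) < ∏ i, ‖x i‖ :=
      Finset.prod_pos (fun i _ => norm_pos_iff.mpr (hTx0 i))
    have h1 : ‖T x‖ ≤ ‖T y‖ := by
      rw [hnormy]
      calc ‖T x‖ = 1 * ‖T x‖ := (one_mul _).symm
        _ ≤ (∏ i, ‖x i‖)⁻¹ * ‖T x‖ := by
            apply mul_le_mul_of_nonneg_right _ (norm_nonneg _)
            rw [le_inv_comm₀ one_pos hprodpos]
            simpa using hprodle
    have h2 : ‖T y‖ ≤ ‖T‖ := by
      have := T.le_opNorm y
      simpa [hynorm] using this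
    exact le_antisymm h2 (le_trans hTle h1)

theorem stmt18 {𝕜 : Type*} [RCLike 𝕜] {k : ℕ} {X : Fin k → Type*}
    [∀ i, NormedAddCommGroup (X i)] [∀ i, NormedSpace 𝕜 (X i)]
    [∀ i, FiniteDimensional 𝕜 (X i)]
    {Y : Type*} [NormedAddCommGroup Y] [NormedSpace 𝕜 Y] [FiniteDimensional 𝕜 Y]
    (T : ContinuousMultilinearMap 𝕜 X Y) (hT : T ≠ 0)
    (hsmooth : ∀ A₁ A₂ : ContinuousMultilinearMap 𝕜 X Y,
      (∀ lam : 𝕜, ‖T‖ ≤ ‖T + lam • A₁‖) → (∀ lam : 𝕜, ‖T‖ ≤ ‖T + lam • A₂‖) →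
      (∀ lam : 𝕜, ‖T‖ ≤ ‖T + lam • (A₁ + A₂)‖)) :
    ∀ A : ContinuousMultilinearMap 𝕜 X Y, (∀ lam : 𝕜, ‖T‖ ≤ ‖T + lam • A‖) →
      ∃ x₀ : ∀ i, X i, (∀ i, ‖x₀ i‖ = 1) ∧ ‖T x₀‖ = ‖T‖ ∧
        (∀ lam : 𝕜, ‖T x₀‖ ≤ ‖T x₀ + lam • A x₀‖) := by
  intro A hA
  obtain ⟨x₀, hx1, hxT⟩ := attain18 T hT
  have hTpos : (0:ℝ) < ‖T‖ := norm_pos_iff.mpr hT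
  have hTx0 : T x₀ ≠ 0 := by
    rw [← norm_ne_zero_iff, hxT]; exact ne_of_gt hTpos
  obtain ⟨f, hf1, hfx⟩ := exists_dual_vector 𝕜 (T x₀) (norm_ne_zero_iff.mpr hTx0)
  have hprod1 : ∏ i, ‖x₀ i‖ = 1 := by
    simp [hx1]
  set c : 𝕜 := f (A x₀) with hc
  have key : c = 0 := by
    by_contra hne
    set A' : ContinuousMultilinearMap 𝕜 X Y := A - (c / (‖T‖ : 𝕜)) • T with hA'def
    have hTne : ((‖T‖ : ℝ) : 𝕜) ≠ 0 := by
      exact_mod_cast RCLike.ofReal_ne_zero.mpr (ne_of_gt hTpos)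
    have hA'x : f (A' x₀) = 0 := by
      have : A' x₀ = A x₀ - (c / (‖T‖ : 𝕜)) • T x₀ := by
        simp [hA'def]
      rw [this, map_sub, map_smul, hfx, ← hc, hxT]
      rw [smul_eq_mul, div_mul_cancel₀ c hTne, sub_self]
    have horthA' : ∀ lam : 𝕜, ‖T‖ ≤ ‖T + lam • (-A')‖ := by
      intro lam
      have happ : (T + lam • (-A')) x₀ = T x₀ + lam • (-(A' x₀)) := by
        simp
      have hval : f ((T + lam • (-A')) x₀) = (‖T‖ : 𝕜) := by
        rw [happ, map_add, map_smul, map_neg, hA'x, hfx, hxT]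
        simp
      calc ‖T‖ = ‖f ((T + lam • (-A')) x₀)‖ := by
            rw [hval]; simp [abs_of_nonneg hTpos.le]
        _ ≤ ‖f‖ * ‖(T + lam • (-A')) x₀‖ := f.le_opNorm _
        _ = ‖(T + lam • (-A')) x₀‖ := by rw [hf1, one_mul]
        _ ≤ ‖T + lam • (-A')‖ * ∏ i, ‖x₀ i‖ := (T + lam • (-A')).le_opNorm x₀
        _ = ‖T + lam • (-A')‖ := by rw [hprod1, mul_one]
    have hsum : A + (-A') = (c / (‖T‖ : 𝕜)) • T := by
      rw [hA'def]; abel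
    have hfinal := hsmooth A (-A') hA horthA' (-(‖T‖ : 𝕜)/c)
    rw [hsum, smul_smul] at hfinal
    have hcoef : (-(‖T‖ : 𝕜)/c) * (c / (‖T‖ : 𝕜)) = -1 := by
      field_simp
    rw [hcoef] at hfinal
    simp at hfinal
    exact hT hfinal
  refine ⟨x₀, hx1, hxT, fun lam => ?_⟩
  have hval : f (T x₀ + lam • A x₀) = (‖T x₀‖ : 𝕜) := by
    rw [map_add, map_smul, hfx, ← hc, key]
    simp
  calc ‖T x₀‖ = ‖f (T x₀ + lam • A x₀)‖ := by
        rw [hval]; simp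
    _ ≤ ‖f‖ * ‖T x₀ + lam • A x₀‖ := f.le_opNorm _
    _ = ‖T x₀ + lam • A x₀‖ := by rw [hf1, one_mul]
end

section
/- Let X_1, …, X_k, Y be finite-dimensional Banach spaces and T a nonzero bounded k-linear map. Then T is smooth if and only if for every bounded k-linear map A, the set Ω'(T,A) := { y*(A x⃗) : x⃗ ∈ M_T, y* ∈ J(T x⃗) } is a singleton. -/
open Filter Topology Metric

theorem aux_attain {𝕜 : Type*} [RCLike 𝕜] {k : ℕ} {X : Fin k → Type*}
    [∀ i, NormedAddCommGroup (X i)] [∀ i, NormedSpace 𝕜 (X i)]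
    [∀ i, FiniteDimensional 𝕜 (X i)]
    {Y : Type*} [NormedAddCommGroup Y] [NormedSpace 𝕜 Y] [FiniteDimensional 𝕜 Y]
    (T : ContinuousMultilinearMap 𝕜 X Y) (hT : T ≠ 0) :
    ∃ x : ∀ i, X i, (∀ i, ‖x i‖ = 1) ∧ ‖T x‖ = ‖T‖ := by
  have hnt : ∀ i, Nontrivial (X i) := by
    intro i
    by_contra hc
    have hs : Subsingleton (X i) := not_nontrivial_iff_subsingleton.mp hc
    apply hT
    ext m
    have : m i = 0 := Subsingleton.elim _ _
    simp [T.map_coord_zero i this]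
  haveI := hnt
  haveI : ProperSpace (∀ i, X i) := FiniteDimensional.proper 𝕜 _
  set K : Set (∀ i, X i) := Set.univ.pi fun i => sphere (0 : X i) 1 with hK
  have hKc : IsCompact K := by
    have : IsCompact (Metric.closedBall (0 : ∀ i, X i) 1) :=
      isCompact_closedBall _ _
    apply this.of_isClosed_subset
    · exact isClosed_set_pi fun i _ => isClosed_sphere
    · intro x hx
      rw [Metric.mem_closedBall, dist_zero_right]
      rw [pi_norm_le_iff_of_nonneg zero_le_one]
      intro i
      have := hx i (Set.mem_univ i)
      rw [mem_sphere_zero_iff_norm] at this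
      exact le_of_eq this
  have hKne : K.Nonempty := by
    have hu : ∀ i, ∃ u : X i, ‖u‖ = 1 := by
      intro i
      obtain ⟨v, hv⟩ := exists_ne (0 : X i)
      refine ⟨((‖v‖⁻¹ : ℝ) : 𝕜) • v, ?_⟩
      rw [norm_smul, RCLike.norm_ofReal, abs_of_nonneg (by positivity)]
      exact inv_mul_cancel₀ (norm_ne_zero_iff.mpr hv)
    choose u hu using hu
    exact ⟨u, fun i _ => by rw [mem_sphere_zero_iff_norm]; exact hu i⟩
  obtain ⟨x₀, hx₀K, hmax⟩ := hKc.exists_isMaxOn hKne (T.cont.norm.continuousOn)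
  have hx₀ : ∀ i, ‖x₀ i‖ = 1 := by
    intro i
    have := hx₀K i (Set.mem_univ i)
    rwa [mem_sphere_zero_iff_norm] at this
  refine ⟨x₀, hx₀, le_antisymm ?_ ?_⟩
  · calc ‖T x₀‖ ≤ ‖T‖ * ∏ i, ‖x₀ i‖ := T.le_opNorm x₀
    _ = ‖T‖ := by simp [hx₀]
  · apply T.opNorm_le_bound (norm_nonneg _)
    intro m
    by_cases hm : ∃ i, m i = 0
    · obtain ⟨i, hi⟩ := hm
      rw [T.map_coord_zero i hi]
      simp only [norm_zero]
      positivity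
    · push_neg at hm
      set u : ∀ i, X i := fun i => ((‖m i‖⁻¹ : ℝ) : 𝕜) • m i with hu
      have hun : ∀ i, ‖u i‖ = 1 := by
        intro i
        rw [hu, norm_smul, RCLike.norm_ofReal,
          abs_of_nonneg (by positivity)]
        exact inv_mul_cancel₀ (norm_ne_zero_iff.mpr (hm i))
      have huK : u ∈ K := fun i _ => by rw [mem_sphere_zero_iff_norm]; exact hun i
      have hmu : m = fun i => ((‖m i‖ : ℝ) : 𝕜) • u i := by
        funext i
        rw [hu, smul_smul, ← RCLike.ofReal_mul,
          mul_inv_cancel₀ (norm_ne_zero_iff.mpr (hm i))]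
        simp
      have : T m = (∏ i, ((‖m i‖ : ℝ) : 𝕜)) • T u := by
        conv_lhs => rw [hmu]
        exact T.toMultilinearMap.map_smul_univ _ u
      rw [this, norm_smul]
      have h1 : ‖∏ i, ((‖m i‖ : ℝ) : 𝕜)‖ = ∏ i, ‖m i‖ := by
        rw [← RCLike.ofReal_prod, RCLike.norm_ofReal]
        exact abs_of_nonneg (Finset.prod_nonneg fun i _ => norm_nonneg _)
      rw [h1, mul_comm]
      gcongr
      exact hmax huK

theorem aux_pair {𝕜 : Type*} [RCLike 𝕜] {k : ℕ} {X : Fin k → Type*}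
    [∀ i, NormedAddCommGroup (X i)] [∀ i, NormedSpace 𝕜 (X i)]
    [∀ i, FiniteDimensional 𝕜 (X i)]
    {Y : Type*} [NormedAddCommGroup Y] [NormedSpace 𝕜 Y] [FiniteDimensional 𝕜 Y]
    (T : ContinuousMultilinearMap 𝕜 X Y) (hT : T ≠ 0) :
    ∃ (x : ∀ i, X i) (y : Y →L[𝕜] 𝕜), (∀ i, ‖x i‖ = 1) ∧ ‖T x‖ = ‖T‖ ∧
      ‖y‖ = 1 ∧ y (T x) = (‖T x‖ : 𝕜) := by
  obtain ⟨x, hx, hTx⟩ := aux_attain T hT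
  have hTx0 : T x ≠ 0 := by
    rw [← norm_ne_zero_iff, hTx, norm_ne_zero_iff]
    exact hT
  obtain ⟨y, hy, hyTx⟩ := exists_dual_vector 𝕜 (T x) (norm_ne_zero_iff.mpr hTx0)
  exact ⟨x, y, hx, hTx, hy, hyTx⟩

theorem aux_orth {𝕜 : Type*} [RCLike 𝕜] {k : ℕ} {X : Fin k → Type*}
    [∀ i, NormedAddCommGroup (X i)] [∀ i, NormedSpace 𝕜 (X i)]
    [∀ i, FiniteDimensional 𝕜 (X i)]
    {Y : Type*} [NormedAddCommGroup Y] [NormedSpace 𝕜 Y] [FiniteDimensional 𝕜 Y]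
    (T A : ContinuousMultilinearMap 𝕜 X Y) (hT : T ≠ 0)
    (horth : ∀ lam : 𝕜, ‖T‖ ≤ ‖T + lam • A‖) :
    ∃ (x : ∀ i, X i) (y : Y →L[𝕜] 𝕜), (∀ i, ‖x i‖ = 1) ∧ ‖T x‖ = ‖T‖ ∧
      ‖y‖ = 1 ∧ y (T x) = (‖T x‖ : 𝕜) ∧ 0 ≤ RCLike.re (y (A x)) := by
  set t : ℕ → ℝ := fun n => ((n : ℝ) + 1)⁻¹ with ht
  have htpos : ∀ n, 0 < t n := fun n => by positivity
  set Tn : ℕ → ContinuousMultilinearMap 𝕜 X Y :=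
    fun n => T + ((t n : ℝ) : 𝕜) • A with hTn
  have hTpos : 0 < ‖T‖ := norm_pos_iff.mpr hT
  have hTnnorm_ge : ∀ n, ‖T‖ ≤ ‖Tn n‖ := fun n => horth _
  have hTnne : ∀ n, Tn n ≠ 0 := by
    intro n h0
    have := hTnnorm_ge n
    rw [h0, norm_zero] at this
    exact hTpos.not_ge this
  choose x y hx hTx hy hyTx using fun n => aux_pair (Tn n) (hTnne n)
  haveI : ProperSpace (∀ i, X i) := FiniteDimensional.proper 𝕜 _
  haveI : ∀ i, ProperSpace (X i) := fun i => FiniteDimensional.proper 𝕜 _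
  haveI : ProperSpace (Y →L[𝕜] 𝕜) := FiniteDimensional.proper 𝕜 _
  set S := (Set.univ.pi fun i => sphere (0 : X i) 1) ×ˢ
    sphere (0 : Y →L[𝕜] 𝕜) 1 with hS
  have hSc : IsCompact S :=
    (isCompact_univ_pi fun i => isCompact_sphere 0 1).prod (isCompact_sphere 0 1)
  have hzS : ∀ n, (x n, y n) ∈ S := by
    intro n
    constructor
    · intro i _
      rw [mem_sphere_zero_iff_norm]; exact hx n i
    · rw [mem_sphere_zero_iff_norm]; exact hy n
  obtain ⟨z₀, hz₀, φ, hφ, hzconv⟩ := hSc.tendsto_subseq hzS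
  have hxconv : Tendsto (fun n => x (φ n)) atTop (𝓝 z₀.1) :=
    (continuous_fst.tendsto z₀).comp hzconv
  have hyconv : Tendsto (fun n => y (φ n)) atTop (𝓝 z₀.2) :=
    (continuous_snd.tendsto z₀).comp hzconv
  have ht0 : Tendsto t atTop (𝓝 0) := by
    simpa [ht, one_div] using tendsto_one_div_add_atTop_nhds_zero_nat (𝕜 := ℝ)
  have htconv : Tendsto (fun n => t (φ n)) atTop (𝓝 0) :=
    ht0.comp hφ.tendsto_atTop
  have hcconv : Tendsto (fun n => ((t (φ n) : ℝ) : 𝕜)) atTop (𝓝 0) := by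
    have h := (RCLike.continuous_ofReal (K := 𝕜)).tendsto (0 : ℝ)
    rw [RCLike.ofReal_zero] at h
    exact h.comp htconv
  have hTnconv : Tendsto (fun n => Tn (φ n)) atTop (𝓝 T) := by
    have : Tendsto (fun n => T + ((t (φ n) : ℝ) : 𝕜) • A) atTop
        (𝓝 (T + (0 : 𝕜) • A)) := tendsto_const_nhds.add (hcconv.smul tendsto_const_nhds)
    simpa using this
  have hTnnormconv : Tendsto (fun n => ‖Tn (φ n)‖) atTop (𝓝 ‖T‖) := hTnconv.norm
  have hTxconv : Tendsto (fun n => T (x (φ n))) atTop (𝓝 (T z₀.1)) :=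
    (T.cont.tendsto z₀.1).comp hxconv
  have hAxconv : Tendsto (fun n => A (x (φ n))) atTop (𝓝 (A z₀.1)) :=
    (A.cont.tendsto z₀.1).comp hxconv
  have hTnapp : ∀ n, Tn n (x n) = T (x n) + ((t n : ℝ) : 𝕜) • A (x n) := by
    intro n; simp [hTn]
  have hTnxconv : Tendsto (fun n => Tn (φ n) (x (φ n))) atTop (𝓝 (T z₀.1)) := by
    have h := hTxconv.add (hcconv.smul hAxconv)
    simp only [zero_smul, add_zero] at h
    simpa only [hTnapp] using h
  have hnorm : ‖T z₀.1‖ = ‖T‖ := by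
    refine tendsto_nhds_unique hTnxconv.norm ?_
    have : (fun n => ‖Tn (φ n) (x (φ n))‖) = fun n => ‖Tn (φ n)‖ := by
      funext n; exact hTx (φ n)
    rw [this]; exact hTnnormconv
  have happly : Continuous fun p : (Y →L[𝕜] 𝕜) × Y => p.1 p.2 :=
    isBoundedBilinearMap_apply.continuous
  have hval : z₀.2 (T z₀.1) = ((‖T‖ : ℝ) : 𝕜) := by
    have h1 : Tendsto (fun n => (y (φ n)) (Tn (φ n) (x (φ n)))) atTop
        (𝓝 (z₀.2 (T z₀.1))) :=
      (happly.tendsto (z₀.2, T z₀.1)).comp (hyconv.prodMk_nhds hTnxconv)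
    have h2 : (fun n => (y (φ n)) (Tn (φ n) (x (φ n)))) =
        fun n => ((‖Tn (φ n)‖ : ℝ) : 𝕜) := by
      funext n; rw [hyTx (φ n), hTx (φ n)]
    rw [h2] at h1
    exact tendsto_nhds_unique h1
      ((RCLike.continuous_ofReal.tendsto _).comp hTnnormconv)
  have hstep : ∀ n, 0 ≤ RCLike.re ((y n) (A (x n))) := by
    intro n
    have h1 : RCLike.re ((y n) (Tn n (x n))) = ‖Tn n‖ := by
      rw [hyTx n, hTx n, RCLike.ofReal_re]
    have h2 : (y n) (Tn n (x n)) =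
        (y n) (T (x n)) + (t n) • ((y n) (A (x n))) := by
      rw [hTnapp n, map_add, map_smul, smul_eq_mul, ← RCLike.real_smul_eq_coe_mul]
    have h3 : RCLike.re ((y n) (T (x n))) ≤ ‖T‖ := by
      calc RCLike.re ((y n) (T (x n))) ≤ ‖(y n) (T (x n))‖ := RCLike.re_le_norm _
      _ ≤ ‖y n‖ * ‖T (x n)‖ := (y n).le_opNorm _
      _ = ‖T (x n)‖ := by rw [hy n, one_mul]
      _ ≤ ‖T‖ * ∏ i, ‖x n i‖ := T.le_opNorm _
      _ = ‖T‖ := by simp [hx n]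
    have h4 : ‖T‖ ≤ RCLike.re ((y n) (T (x n))) + t n * RCLike.re ((y n) (A (x n))) := by
      have h5 := hTnnorm_ge n
      rw [← h1, h2, map_add, RCLike.smul_re] at h5
      exact h5
    nlinarith [htpos n]
  have hrefinal : 0 ≤ RCLike.re (z₀.2 (A z₀.1)) := by
    have h1 : Tendsto (fun n => RCLike.re ((y (φ n)) (A (x (φ n))))) atTop
        (𝓝 (RCLike.re (z₀.2 (A z₀.1)))) :=
      (RCLike.continuous_re.tendsto _).comp
        ((happly.tendsto (z₀.2, A z₀.1)).comp (hyconv.prodMk_nhds hAxconv))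
    exact ge_of_tendsto' h1 fun n => hstep (φ n)
  have hz1 : ∀ i, ‖z₀.1 i‖ = 1 := by
    intro i
    have := hz₀.1 i (Set.mem_univ i)
    rwa [mem_sphere_zero_iff_norm] at this
  have hz2 : ‖z₀.2‖ = 1 := by
    have := hz₀.2
    rwa [mem_sphere_zero_iff_norm] at this
  exact ⟨z₀.1, z₀.2, hz1, hnorm, hz2, by rw [hnorm]; exact hval, hrefinal⟩


theorem aux_bound {𝕜 : Type*} [RCLike 𝕜] {k : ℕ} {X : Fin k → Type*}
    [∀ i, NormedAddCommGroup (X i)] [∀ i, NormedSpace 𝕜 (X i)]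
    {Y : Type*} [NormedAddCommGroup Y] [NormedSpace 𝕜 Y]
    (B : ContinuousMultilinearMap 𝕜 X Y) (x : ∀ i, X i) (y : Y →L[𝕜] 𝕜)
    (hx : ∀ i, ‖x i‖ = 1) (hy : ‖y‖ = 1) : ‖y (B x)‖ ≤ ‖B‖ := by
  calc ‖y (B x)‖ ≤ ‖y‖ * ‖B x‖ := y.le_opNorm _
  _ = ‖B x‖ := by rw [hy, one_mul]
  _ ≤ ‖B‖ * ∏ i, ‖x i‖ := B.le_opNorm _
  _ = ‖B‖ := by simp [hx]

theorem stmt19 {𝕜 : Type*} [RCLike 𝕜] {k : ℕ} {X : Fin k → Type*}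
    [∀ i, NormedAddCommGroup (X i)] [∀ i, NormedSpace 𝕜 (X i)]
    [∀ i, FiniteDimensional 𝕜 (X i)]
    {Y : Type*} [NormedAddCommGroup Y] [NormedSpace 𝕜 Y] [FiniteDimensional 𝕜 Y]
    (T : ContinuousMultilinearMap 𝕜 X Y) (hT : T ≠ 0) :
    (∀ A₁ A₂ : ContinuousMultilinearMap 𝕜 X Y,
      (∀ lam : 𝕜, ‖T‖ ≤ ‖T + lam • A₁‖) → (∀ lam : 𝕜, ‖T‖ ≤ ‖T + lam • A₂‖) →
      (∀ lam : 𝕜, ‖T‖ ≤ ‖T + lam • (A₁ + A₂)‖)) ↔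
    (∀ A : ContinuousMultilinearMap 𝕜 X Y, ∃ lam₀ : 𝕜,
      {lam : 𝕜 | ∃ (x : ∀ i, X i) (y : Y →L[𝕜] 𝕜),
        (∀ i, ‖x i‖ = 1) ∧ ‖T x‖ = ‖T‖ ∧ ‖y‖ = 1 ∧
        y (T x) = (‖T x‖ : 𝕜) ∧ lam = y (A x)} = {lam₀}) := by
  have hTpos : (0:ℝ) < ‖T‖ := norm_pos_iff.mpr hT
  obtain ⟨x₀, y₀, hx₀, hTx₀, hy₀, hyT₀⟩ := aux_pair T hT
  constructor
  · intro hsm A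
    refine ⟨y₀ (A x₀), ?_⟩
    ext lam
    simp only [Set.mem_setOf_eq, Set.mem_singleton_iff]
    constructor
    · rintro ⟨x, y, hx, hTx, hy, hyT, rfl⟩
      by_contra hne
      set A₁ : ContinuousMultilinearMap 𝕜 X Y :=
        ((‖T‖ : ℝ) : 𝕜) • A - (y (A x)) • T with hA₁
      set A₂ : ContinuousMultilinearMap 𝕜 X Y :=
        (y₀ (A x₀)) • T - ((‖T‖ : ℝ) : 𝕜) • A with hA₂
      have horth1 : ∀ mu : 𝕜, ‖T‖ ≤ ‖T + mu • A₁‖ := by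
        intro mu
        have h1 : y ((T + mu • A₁) x) = ((‖T‖ : ℝ) : 𝕜) := by
          simp only [hA₁, ContinuousMultilinearMap.add_apply,
            ContinuousMultilinearMap.smul_apply, ContinuousMultilinearMap.sub_apply,
            map_add, map_smul, map_sub, smul_eq_mul, hyT, hTx]
          ring
        calc ‖T‖ = ‖y ((T + mu • A₁) x)‖ := by
              rw [h1, RCLike.norm_ofReal, abs_of_nonneg (norm_nonneg T)]
        _ ≤ ‖T + mu • A₁‖ := aux_bound _ x y hx hy
      have horth2 : ∀ mu : 𝕜, ‖T‖ ≤ ‖T + mu • A₂‖ := by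
        intro mu
        have h1 : y₀ ((T + mu • A₂) x₀) = ((‖T‖ : ℝ) : 𝕜) := by
          simp only [hA₂, ContinuousMultilinearMap.add_apply,
            ContinuousMultilinearMap.smul_apply, ContinuousMultilinearMap.sub_apply,
            map_add, map_smul, map_sub, smul_eq_mul, hyT₀, hTx₀]
          ring
        calc ‖T‖ = ‖y₀ ((T + mu • A₂) x₀)‖ := by
              rw [h1, RCLike.norm_ofReal, abs_of_nonneg (norm_nonneg T)]
        _ ≤ ‖T + mu • A₂‖ := aux_bound _ x₀ y₀ hx₀ hy₀
      set d : 𝕜 := y₀ (A x₀) - y (A x) with hd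
      have hdne : d ≠ 0 := sub_ne_zero.mpr fun hc => hne hc.symm
      have hsum : A₁ + A₂ = d • T := by
        rw [hA₁, hA₂, hd, sub_smul]
        abel
      have hfin := hsm A₁ A₂ horth1 horth2 (-d⁻¹)
      rw [hsum, smul_smul, neg_mul, inv_mul_cancel₀ hdne, neg_smul, one_smul,
        add_neg_cancel, norm_zero] at hfin
      exact absurd hfin (not_le.mpr hTpos)
    · rintro rfl
      exact ⟨x₀, y₀, hx₀, hTx₀, hy₀, hyT₀, rfl⟩
  · intro h A₁ A₂ h₁ h₂ lam
    have claim : ∀ A : ContinuousMultilinearMap 𝕜 X Y,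
        (∀ mu : 𝕜, ‖T‖ ≤ ‖T + mu • A‖) → y₀ (A x₀) = 0 := by
      intro A hA
      obtain ⟨lam₀, hset⟩ := h A
      have hmem : ∀ (x : ∀ i, X i) (y : Y →L[𝕜] 𝕜), (∀ i, ‖x i‖ = 1) →
          ‖T x‖ = ‖T‖ → ‖y‖ = 1 → y (T x) = (‖T x‖ : 𝕜) → y (A x) = lam₀ := by
        intro x y hx hTx hy hyT
        have hm : y (A x) ∈ {lam : 𝕜 | ∃ (x : ∀ i, X i) (y : Y →L[𝕜] 𝕜),
            (∀ i, ‖x i‖ = 1) ∧ ‖T x‖ = ‖T‖ ∧ ‖y‖ = 1 ∧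
            y (T x) = (‖T x‖ : 𝕜) ∧ lam = y (A x)} := ⟨x, y, hx, hTx, hy, hyT, rfl⟩
        rw [hset] at hm
        exact hm
      have hy₀A : y₀ (A x₀) = lam₀ := hmem x₀ y₀ hx₀ hTx₀ hy₀ hyT₀
      have hkey : ∀ c : 𝕜, 0 ≤ RCLike.re (c * lam₀) := by
        intro c
        have hAc : ∀ mu : 𝕜, ‖T‖ ≤ ‖T + mu • (c • A)‖ := by
          intro mu
          have := hA (mu * c)
          rwa [← smul_smul] at this
        obtain ⟨x, y, hx, hTx, hy, hyT, hre⟩ := aux_orth T (c • A) hT hAc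
        have h1 : y ((c • A) x) = c * (y (A x)) := by
          simp [ContinuousMultilinearMap.smul_apply, map_smul, smul_eq_mul]
        rw [h1, hmem x y hx hTx hy hyT] at hre
        exact hre
      have hlam0 : lam₀ = 0 := by
        have h2 := hkey (-(starRingEnd 𝕜 lam₀))
        have h3 : RCLike.re ((starRingEnd 𝕜 lam₀) * lam₀) = ‖lam₀‖ ^ 2 := by
          rw [RCLike.conj_mul, ← RCLike.ofReal_pow, RCLike.ofReal_re]
        rw [neg_mul, map_neg, h3] at h2
        have h4 : ‖lam₀‖ ^ 2 = 0 := le_antisymm (by linarith) (sq_nonneg _)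
        exact norm_eq_zero.mp (pow_eq_zero_iff two_ne_zero |>.mp h4)
      rw [hy₀A, hlam0]
    have e1 := claim A₁ h₁
    have e2 := claim A₂ h₂
    have h1 : y₀ ((T + lam • (A₁ + A₂)) x₀) = ((‖T‖ : ℝ) : 𝕜) := by
      simp only [ContinuousMultilinearMap.add_apply,
        ContinuousMultilinearMap.smul_apply, map_add, map_smul, smul_eq_mul,
        e1, e2, hyT₀, hTx₀, mul_zero, add_zero]
    calc ‖T‖ = ‖y₀ ((T + lam • (A₁ + A₂)) x₀)‖ := by
          rw [h1, RCLike.norm_ofReal, abs_of_nonneg (norm_nonneg T)]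
    _ ≤ ‖T + lam • (A₁ + A₂)‖ := aux_bound _ x₀ y₀ hx₀ hy₀
end
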